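/- arXiv:1009.2316 — 3 statements merged into one kernel-verified Lean document; each statement's English description precedes it below -/
import Mathlib

section
/- Let n be a positive even integer, e_1,…,e_n the standard basis of ℝⁿ, e_0 = e_1+⋯+e_n, and let F_0,…,F_n be the complete flags F_0 = F(e_0,e_1,…,e_{n−1}), F_1 = F(e_1,e_2,…,e_n), and F_i = F(e_i,e_{i+1},…,e_n,e_0,e_1,…,e_{i−1}) for 2 ≤ i ≤ n. If b is a map from n-tuples of complete flags in ℝⁿ to ℝ satisfying b(gG_1,…,gG_n) = sign(det g)·b(G_1,…,G_n) for every g ∈ GL_n(ℤ) (i.e. b is PGL_n(ℤ)-equivariant with values in ℝ_ε), then ∑_{i=0}^{n} (−1)^i b(F_0,…,F̂_i,…,F_n) = 0. -/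
noncomputable section

/-- The complete flag `F(w_1,…,w_n)` associated with a basis, as the function sending
`i ∈ {0,…,n}` to the span of the first `i` basis vectors. -/
def stdFlag {n : ℕ} (w : Fin n → (Fin n → ℝ)) : Fin (n + 1) → Submodule ℝ (Fin n → ℝ) :=
  fun i => Submodule.span ℝ (w '' {j | (j : ℕ) < (i : ℕ)})

/-- A function `Fin (n+1) → Submodule ℝ (Fin n → ℝ)` is a complete flag if it is an
increasing chain of subspaces with `dim Fⁱ = i`. -/
def IsCompleteFlag {n : ℕ} (s : Fin (n + 1) → Submodule ℝ (Fin n → ℝ)) : Prop :=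
  Monotone s ∧ ∀ i, Module.finrank ℝ (s i) = (i : ℕ)

/-- The action of an integer matrix on complete flags, by taking images of subspaces. -/
def mapFlag {n : ℕ} (g : Matrix (Fin n) (Fin n) ℤ)
    (s : Fin (n + 1) → Submodule ℝ (Fin n → ℝ)) : Fin (n + 1) → Submodule ℝ (Fin n → ℝ) :=
  fun i => Submodule.map (Matrix.mulVecLin (g.map (Int.cast : ℤ → ℝ))) (s i)

/-- The cyclic list `(e_0, e_1, …, e_n)` where `e_1, …, e_n` is the standard basis of
`ℝⁿ` and `e_0 = e_1 + ⋯ + e_n`. -/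
def cyc (n : ℕ) : Fin (n + 1) → (Fin n → ℝ) :=
  fun k => if h : (k : ℕ) = 0 then (fun _ => 1)
    else Pi.single (⟨(k : ℕ) - 1, by have := k.isLt; omega⟩ : Fin n) 1

/-- The basis `(e_i, e_{i+1}, …)` (indices cyclic in `(e_0, …, e_n)`, keeping the first
`n` entries), whose flag is the flag `F_i` of Bucher–Monod's Lemma on vanishing of
coboundaries: `F_0 = F(e_0,e_1,…,e_{n−1})`, `F_1 = F(e_1,…,e_n)`, and
`F_i = F(e_i,…,e_n,e_0,…,e_{i−2})` for `2 ≤ i ≤ n`. -/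
def flagTuple (n : ℕ) (i : Fin (n + 1)) : Fin n → (Fin n → ℝ) :=
  fun j => cyc n (i + Fin.castSucc j)

namespace Aux14

open Matrix

/-- integer version of `cyc` -/
def icyc (n : ℕ) : Fin (n + 1) → (Fin n → ℤ) :=
  fun k => if h : (k : ℕ) = 0 then (fun _ => 1)
    else Pi.single (⟨(k : ℕ) - 1, by have := k.isLt; omega⟩ : Fin n) 1

lemma icyc_cast (n : ℕ) (k : Fin (n+1)) :
    (fun j => ((icyc n k j : ℤ) : ℝ)) = cyc n k := by
  funext j
  unfold icyc cyc
  split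
  · simp
  · simp only [Pi.single_apply]
    split <;> simp

lemma val_one' {n : ℕ} (hn : 0 < n) : ((1 : Fin (n+1)) : ℕ) = 1 := by
  rw [Fin.val_one', Nat.mod_eq_of_lt (by omega)]

lemma coe_sub_one {n : ℕ} (hn : 0 < n) (i : Fin (n+1)) :
    ((i - 1 : Fin (n+1)) : ℕ) = if (i : ℕ) = 0 then n else (i : ℕ) - 1 := by
  rw [Fin.sub_def, val_one' hn]
  have hi := i.isLt
  rcases Nat.eq_zero_or_pos (i : ℕ) with h | h
  · rw [if_pos h]
    show (n + 1 - 1 + (i:ℕ)) % (n+1) = n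
    rw [h, Nat.add_zero, Nat.mod_eq_of_lt (by omega)]; omega
  · show (n + 1 - 1 + (i:ℕ)) % (n+1) = _
    have h2 : n + 1 - 1 + (i:ℕ) = ((i:ℕ) - 1) + (n+1) := by omega
    rw [h2, Nat.add_mod_right, Nat.mod_eq_of_lt (by omega), if_neg (by omega)]

lemma sub_one_ne {n : ℕ} (hn : 0 < n) (i : Fin (n+1)) : i - 1 ≠ i := by
  intro h
  have := congrArg (Fin.val) h
  rw [coe_sub_one hn] at this
  split at this <;> omega


variable {n : ℕ}

def uu (n : ℕ) (i : Fin (n+1)) : Fin n → ℤ := icyc n (i - 1)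

def vv (n : ℕ) (i : Fin (n+1)) : Fin n → ℤ :=
  if (i : ℕ) = 0 then icyc n (i - 1)
  else if (i : ℕ) = 1 then icyc n i
  else icyc n (i - 1) - icyc n i

def gmat (n : ℕ) (i : Fin (n+1)) : Matrix (Fin n) (Fin n) ℤ :=
  1 + Matrix.vecMulVec ((-2 : ℤ) • uu n i) (vv n i)

lemma icyc_of_ne (n : ℕ) (k : Fin (n+1)) (h : (k : ℕ) ≠ 0) :
    icyc n k = Pi.single (⟨(k : ℕ) - 1, by have := k.isLt; omega⟩ : Fin n) 1 := by
  simp [icyc, h]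

lemma icyc_zero (n : ℕ) : icyc n 0 = fun _ => 1 := by simp [icyc]

lemma single_dot_icyc (hn : 0 < n) (c : Fin n) (m : Fin (n+1)) :
    (Pi.single c 1 : Fin n → ℤ) ⬝ᵥ icyc n m =
      if (m : ℕ) = (c : ℕ) + 1 ∨ (m : ℕ) = 0 then 1 else 0 := by
  rcases Nat.eq_zero_or_pos (m : ℕ) with h | h
  · rw [icyc, dif_pos h, single_dotProduct]
    simp [h]
  · rw [icyc_of_ne n m (by omega), single_dotProduct, Pi.single_apply, one_mul]
    have hm := m.isLt
    simp only [Fin.ext_iff, Fin.val_mk]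
    split_ifs <;> omega

lemma icyc_dot_icyc (hn : 0 < n) (a : Fin (n+1)) {b : Fin (n+1)} (ha : (a : ℕ) ≠ 0) :
    icyc n a ⬝ᵥ icyc n b = if (b : ℕ) = (a : ℕ) ∨ (b : ℕ) = 0 then 1 else 0 := by
  rw [icyc_of_ne n a ha, single_dot_icyc hn]
  simp only [Fin.val_mk]
  have h : ((b:ℕ) = ((a:ℕ) - 1) + 1 ∨ (b:ℕ) = 0) ↔ ((b:ℕ) = (a:ℕ) ∨ (b:ℕ) = 0) := by omega
  exact if_congr h rfl rfl

lemma dv_eq_one (hn : 0 < n) (i : Fin (n+1)) : vv n i ⬝ᵥ uu n i = 1 := by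
  have hs := coe_sub_one hn i
  have hi := i.isLt
  unfold vv uu
  split_ifs with h0 h1
  · rw [if_pos h0] at hs
    rw [icyc_dot_icyc hn (i-1) (by omega), if_pos (by left; rfl)]
  · rw [if_neg h0] at hs
    rw [icyc_dot_icyc hn i (by omega), if_pos (by right; omega)]
  · rw [if_neg h0] at hs
    rw [sub_dotProduct, icyc_dot_icyc hn (i-1) (by omega), icyc_dot_icyc hn i (by omega),
      if_pos (by left; rfl), if_neg (by push_neg; omega)]
    ring

lemma dv_eq_zero (hn : 0 < n) (i m : Fin (n+1)) (h1 : m ≠ i - 1) (h2 : m ≠ i) :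
    vv n i ⬝ᵥ icyc n m = 0 := by
  have hs := coe_sub_one hn i
  have hm1 : (m : ℕ) ≠ ((i - 1 : Fin (n+1)) : ℕ) := fun h => h1 (Fin.ext h)
  have hm2 : (m : ℕ) ≠ (i : ℕ) := fun h => h2 (Fin.ext h)
  have hi := i.isLt
  have hmlt := m.isLt
  unfold vv
  split_ifs with h0 h1'
  · rw [if_pos h0] at hs
    rw [icyc_dot_icyc hn (i-1) (by omega), if_neg (by push_neg; omega)]
  · rw [if_neg h0] at hs
    rw [icyc_dot_icyc hn i (by omega), if_neg (by push_neg; omega)]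
  · rw [if_neg h0] at hs
    rw [sub_dotProduct, icyc_dot_icyc hn (i-1) (by omega), icyc_dot_icyc hn i (by omega)]
    rcases Nat.eq_zero_or_pos (m : ℕ) with hm0 | hm0
    · rw [if_pos (Or.inr hm0), if_pos (Or.inr hm0)]; ring
    · rw [if_neg (by push_neg; omega), if_neg (by push_neg; omega)]; ring

lemma det_gmat (hn : 0 < n) (i : Fin (n+1)) : (gmat n i).det = -1 := by
  unfold gmat
  rw [Matrix.vecMulVec_eq Unit, Matrix.det_one_add_replicateCol_mul_replicateRow, dotProduct_smul,
    dv_eq_one hn]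
  simp


lemma gmat_map_mulVec (i : Fin (n+1)) (x : Fin n → ℝ) :
    ((gmat n i).map (Int.cast : ℤ → ℝ)).mulVecLin x
      = x + ((-2 : ℝ) * ((fun c => ((vv n i c : ℤ) : ℝ)) ⬝ᵥ x)) • (fun j => ((uu n i j : ℤ) : ℝ)) := by
  funext r
  simp only [Matrix.mulVecLin_apply, Matrix.mulVec, dotProduct, Matrix.map_apply, gmat,
    Matrix.add_apply, Matrix.one_apply, Matrix.vecMulVec_apply, Pi.smul_apply, smul_eq_mul,
    Pi.add_apply, Int.cast_add, Int.cast_mul, Int.cast_ite, Int.cast_one, Int.cast_zero,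
    Int.cast_neg, Int.cast_ofNat, neg_mul, neg_smul]
  simp only [add_mul, Pi.neg_apply, Pi.smul_apply, smul_eq_mul, Finset.sum_add_distrib,
    ite_mul, one_mul, zero_mul, Finset.sum_ite_eq, Finset.mem_univ, if_true]
  push_cast
  congr 1
  rw [Finset.mul_sum, Finset.sum_mul, ← Finset.sum_neg_distrib]
  apply Finset.sum_congr rfl
  intro c _
  ring

lemma act_cyc (hn : 0 < n) (i m : Fin (n+1)) :
    ((gmat n i).map (Int.cast : ℤ → ℝ)).mulVecLin (cyc n m)
      = cyc n m + ((-2 : ℝ) * ((vv n i ⬝ᵥ icyc n m : ℤ) : ℝ)) • cyc n (i - 1) := by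
  rw [gmat_map_mulVec]
  have h1 : (fun c => ((vv n i c : ℤ) : ℝ)) ⬝ᵥ (cyc n m) = ((vv n i ⬝ᵥ icyc n m : ℤ) : ℝ) := by
    rw [← icyc_cast n m]
    simp [dotProduct]
  have h2 : (fun j => ((uu n i j : ℤ) : ℝ)) = cyc n (i - 1) := icyc_cast n (i - 1)
  rw [h1, h2]

lemma act_cyc_of_ne (hn : 0 < n) (i m : Fin (n+1)) (h1 : m ≠ i - 1) (h2 : m ≠ i) :
    ((gmat n i).map (Int.cast : ℤ → ℝ)).mulVecLin (cyc n m) = cyc n m := by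
  rw [act_cyc hn, dv_eq_zero hn i m h1 h2]
  simp

lemma act_cyc_sub_one (hn : 0 < n) (i : Fin (n+1)) :
    ((gmat n i).map (Int.cast : ℤ → ℝ)).mulVecLin (cyc n (i - 1)) = -(cyc n (i - 1)) := by
  rw [act_cyc hn]
  have : vv n i ⬝ᵥ icyc n (i - 1) = 1 := dv_eq_one hn i
  rw [this]
  push_cast
  module

lemma castSucc_sub_one {m : ℕ} [NeZero m] (j : Fin m) (hj : j ≠ 0) :
    Fin.castSucc (j - 1) = Fin.castSucc j - 1 := by
  rcases m with _ | m
  · exact absurd j.pos (by omega)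
  · apply Fin.ext
    have hjv : (j : ℕ) ≠ 0 := fun h => hj (Fin.ext h)
    rw [Fin.coe_castSucc, Fin.coe_sub_one, Fin.coe_sub_one,
      if_neg hj, if_neg (by rw [Fin.ext_iff]; simp only [Fin.val_castSucc, Fin.val_zero]; omega)]
    simp


lemma castSucc_zero' {m : ℕ} [NeZero m] : Fin.castSucc (0 : Fin m) = 0 := by
  apply Fin.ext; simp

lemma val_sub_one {m : ℕ} [NeZero m] (j : Fin m) (hj : j ≠ 0) :
    ((j - 1 : Fin m) : ℕ) = (j : ℕ) - 1 := by
  rcases m with _ | m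
  · exact absurd j.pos (by omega)
  · rw [Fin.coe_sub_one, if_neg hj]

lemma mapFlag_fix (hn : 0 < n) (i k : Fin (n+1)) (hk : k ≠ i) :
    mapFlag (gmat n i) (stdFlag (flagTuple n k)) = stdFlag (flagTuple n k) := by
  have : NeZero n := ⟨by omega⟩
  funext lvl
  simp only [mapFlag, stdFlag]
  rw [Submodule.map_span, ← Set.image_comp]
  set f := Matrix.mulVecLin ((gmat n i).map (Int.cast : ℤ → ℝ)) with hf
  set w := flagTuple n k with hw
  have hwj : ∀ j : Fin n, w j = cyc n (k + Fin.castSucc j) := fun j => rfl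
  apply le_antisymm
  · rw [Submodule.span_le]
    rintro x ⟨j, hj, rfl⟩
    simp only [Set.mem_setOf_eq] at hj
    show f (w j) ∈ Submodule.span ℝ (w '' {j | (j : ℕ) < (lvl : ℕ)})
    by_cases hm1 : k + Fin.castSucc j = i - 1
    · rw [hwj j, hm1, act_cyc_sub_one hn]
      exact neg_mem (Submodule.subset_span ⟨j, hj, by rw [hwj j, hm1]⟩)
    · by_cases hm2 : k + Fin.castSucc j = i
      · have hj0 : j ≠ 0 := by
          intro h
          apply hk
          rw [h, castSucc_zero', add_zero] at hm2
          exact hm2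
        have hprev : k + Fin.castSucc (j - 1) = i - 1 := by
          rw [castSucc_sub_one j hj0, ← add_sub_assoc, hm2]
        have hjm : ((j - 1 : Fin n) : ℕ) < (lvl : ℕ) := by
          rw [val_sub_one j hj0]; omega
        rw [hwj j, hm2, act_cyc hn]
        refine add_mem (Submodule.subset_span ⟨j, hj, ?_⟩)
          (Submodule.smul_mem _ _ (Submodule.subset_span ⟨j - 1, hjm, ?_⟩))
        · rw [hwj j, hm2]
        · rw [hwj (j-1), hprev]
      · rw [hwj j, act_cyc_of_ne hn i _ hm1 hm2]
        exact Submodule.subset_span ⟨j, hj, (hwj j).symm⟩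
  · rw [Submodule.span_le]
    rintro x ⟨j, hj, rfl⟩
    simp only [Set.mem_setOf_eq] at hj
    show w j ∈ Submodule.span ℝ ((f ∘ w) '' {j | (j : ℕ) < (lvl : ℕ)})
    have hmem : ∀ j' : Fin n, ((j' : ℕ) < (lvl : ℕ)) → (f ∘ w) j' ∈
        Submodule.span ℝ ((f ∘ w) '' {j | (j : ℕ) < (lvl : ℕ)}) :=
      fun j' hj' => Submodule.subset_span ⟨j', hj', rfl⟩
    by_cases hm1 : k + Fin.castSucc j = i - 1
    · have e1 : (f ∘ w) j = -(w j) := by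
        show f (w j) = _
        rw [hwj j, hm1, act_cyc_sub_one hn]
      have : w j = -((f ∘ w) j) := by rw [e1, neg_neg]
      rw [this]
      exact neg_mem (hmem j hj)
    · by_cases hm2 : k + Fin.castSucc j = i
      · have hj0 : j ≠ 0 := by
          intro h
          apply hk
          rw [h, castSucc_zero', add_zero] at hm2
          exact hm2
        have hprev : k + Fin.castSucc (j - 1) = i - 1 := by
          rw [castSucc_sub_one j hj0, ← add_sub_assoc, hm2]
        have hjm : ((j - 1 : Fin n) : ℕ) < (lvl : ℕ) := by
          rw [val_sub_one j hj0]; omega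
        have e1 : (f ∘ w) j = w j + ((-2 : ℝ) * ((vv n i ⬝ᵥ icyc n i : ℤ) : ℝ)) • w (j - 1) := by
          show f (w j) = _
          rw [hwj j, hm2, act_cyc hn, hwj (j-1), hprev]
        have e2 : (f ∘ w) (j - 1) = -(w (j - 1)) := by
          show f (w (j-1)) = _
          rw [hwj (j-1), hprev, act_cyc_sub_one hn]
        have : w j = (f ∘ w) j + ((-2 : ℝ) * ((vv n i ⬝ᵥ icyc n i : ℤ) : ℝ)) • (f ∘ w) (j - 1) := by
          rw [e1, e2]
          module
        rw [this]
        exact add_mem (hmem j hj) (Submodule.smul_mem _ _ (hmem (j-1) hjm))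
      · have e1 : (f ∘ w) j = w j := by
          show f (w j) = _
          rw [hwj j, act_cyc_of_ne hn i _ hm1 hm2]
        rw [← e1]
        exact hmem j hj


lemma sub_one_eq_add_n (hn : 0 < n) (k : Fin (n+1)) :
    k - 1 = k + ⟨n, by omega⟩ := by
  apply Fin.ext
  rw [coe_sub_one hn, Fin.val_add]
  show _ = ((k : ℕ) + n) % (n + 1)
  rcases Nat.eq_zero_or_pos (k : ℕ) with h | h
  · rw [if_pos h, h, Nat.zero_add, Nat.mod_eq_of_lt (by omega)]
  · rw [if_neg (by omega)]
    have h2 : (k : ℕ) + n = ((k : ℕ) - 1) + (n + 1) := by omega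
    rw [h2, Nat.add_mod_right, Nat.mod_eq_of_lt (by have := k.isLt; omega)]

lemma mem_range_flagTuple (hn : 0 < n) (k m : Fin (n+1)) (hm : m ≠ k - 1) :
    cyc n m ∈ Set.range (flagTuple n k) := by
  have hlt : ((m - k : Fin (n+1)) : ℕ) < n := by
    have h1 : ((m - k : Fin (n+1)) : ℕ) < n + 1 := (m - k).isLt
    rcases Nat.lt_or_ge ((m - k : Fin (n+1)) : ℕ) n with h | h
    · exact h
    · exfalso
      have h2 : (m - k : Fin (n+1)) = ⟨n, by omega⟩ := Fin.ext (by show _ = n; omega)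
      apply hm
      rw [sub_one_eq_add_n hn, ← h2, add_comm k (m - k), sub_add_cancel]
  refine ⟨⟨((m - k : Fin (n+1)) : ℕ), hlt⟩, ?_⟩
  show cyc n (k + Fin.castSucc _) = cyc n m
  congr 1
  have : Fin.castSucc (⟨((m - k : Fin (n+1)) : ℕ), hlt⟩ : Fin n) = m - k := Fin.ext rfl
  rw [this, add_comm k (m - k), sub_add_cancel]


lemma cyc_zero_eq (hn : 0 < n) : cyc n 0 = fun _ => (1:ℝ) := by
  rw [cyc]
  simp

lemma single_eq_cyc (hn : 0 < n) (c : Fin n) :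
    Pi.single c (1:ℝ) = cyc n (Fin.castSucc c + 1) := by
  have hval : ((Fin.castSucc c + 1 : Fin (n+1)) : ℕ) = (c : ℕ) + 1 := by
    rw [Fin.val_add, Fin.coe_castSucc, val_one' hn, Nat.mod_eq_of_lt (by have := c.isLt; omega)]
  rw [cyc, dif_neg (by omega)]
  funext r
  rw [Pi.single_apply, Pi.single_apply]
  refine if_congr ?_ rfl rfl
  simp only [Fin.ext_iff, Fin.val_mk]
  omega

lemma cyc_mem_span (hn : 0 < n) (k m : Fin (n+1)) :
    cyc n m ∈ Submodule.span ℝ (Set.range (flagTuple n k)) := by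
  by_cases hm : m ≠ k - 1
  · exact Submodule.subset_span (mem_range_flagTuple hn k m hm)
  push_neg at hm
  have hones : (fun _ => (1:ℝ)) = ∑ c : Fin n, Pi.single c (1:ℝ) :=
    (Finset.univ_sum_single (fun _ => (1:ℝ))).symm
  by_cases h0 : (m : ℕ) = 0
  · have : cyc n m = ∑ c : Fin n, cyc n (Fin.castSucc c + 1) := by
      rw [cyc, dif_pos h0, hones]
      exact Finset.sum_congr rfl (fun c _ => single_eq_cyc hn c)
    rw [this]
    refine Submodule.sum_mem _ (fun c _ => Submodule.subset_span
      (mem_range_flagTuple hn k _ ?_))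
    rw [← hm]
    intro h
    have := congrArg Fin.val h
    rw [Fin.val_add, Fin.coe_castSucc, val_one' hn, Nat.mod_eq_of_lt (by have := c.isLt; omega)]
      at this
    omega
  · set c0 : Fin n := ⟨(m : ℕ) - 1, by have := m.isLt; omega⟩ with hc0
    have hm_single : cyc n m = Pi.single c0 1 := by rw [cyc, dif_neg h0]
    have hsplit : Pi.single c0 (1:ℝ)
        = (fun _ => (1:ℝ)) - ∑ c ∈ Finset.univ.erase c0, Pi.single c 1 := by
      rw [hones, ← Finset.add_sum_erase _ _ (Finset.mem_univ c0)]
      abel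
    rw [hm_single, hsplit]
    refine sub_mem ?_ (Submodule.sum_mem _ (fun c hc => ?_))
    · rw [← cyc_zero_eq hn]
      refine Submodule.subset_span (mem_range_flagTuple hn k 0 ?_)
      rw [← hm]
      intro h
      exact h0 (congrArg Fin.val h).symm
    · rw [single_eq_cyc hn c]
      refine Submodule.subset_span (mem_range_flagTuple hn k _ ?_)
      rw [← hm]
      intro h
      have := congrArg Fin.val h
      rw [Fin.val_add, Fin.coe_castSucc, val_one' hn, Nat.mod_eq_of_lt (by have := c.isLt; omega)]
        at this
      have hcc : c ≠ c0 := Finset.ne_of_mem_erase hc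
      have : (c : ℕ) = (c0 : ℕ) := by simp only [hc0, Fin.val_mk]; omega
      exact hcc (Fin.ext this)

lemma span_top (hn : 0 < n) (k : Fin (n+1)) :
    ⊤ ≤ Submodule.span ℝ (Set.range (flagTuple n k)) := by
  rw [← (Pi.basisFun ℝ (Fin n)).span_eq, Submodule.span_le]
  rintro x ⟨c, rfl⟩
  rw [Pi.basisFun_apply, single_eq_cyc hn c]
  exact cyc_mem_span hn k _

lemma li_flagTuple (hn : 0 < n) (k : Fin (n+1)) : LinearIndependent ℝ (flagTuple n k) := by
  have hcard : Fintype.card (Fin n) = Module.finrank ℝ (Fin n → ℝ) := by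
    rw [Module.finrank_fintype_fun_eq_card]
  have := (basisOfTopLeSpanOfCardEqFinrank (flagTuple n k) (span_top hn k) hcard).linearIndependent
  rwa [coe_basisOfTopLeSpanOfCardEqFinrank] at this

lemma isCompleteFlag_stdFlag (hn : 0 < n) (k : Fin (n+1)) :
    IsCompleteFlag (stdFlag (flagTuple n k)) := by
  constructor
  · intro a b hab
    apply Submodule.span_mono
    apply Set.image_mono
    intro j hj
    simp only [Set.mem_setOf_eq] at hj ⊢
    exact lt_of_lt_of_le hj (Fin.le_def.mp hab)
  · intro lvl
    have hle : (lvl : ℕ) ≤ n := by have := lvl.isLt; omega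
    set φ : Fin (lvl : ℕ) → Fin n := fun t => ⟨t, lt_of_lt_of_le t.isLt hle⟩ with hφ
    have hinj : Function.Injective φ := by
      intro a b h
      exact Fin.ext (by simpa [hφ] using congrArg Fin.val h)
    have himg : flagTuple n k '' {j | (j : ℕ) < (lvl : ℕ)} = Set.range (flagTuple n k ∘ φ) := by
      ext x
      constructor
      · rintro ⟨j, hj, rfl⟩
        exact ⟨⟨(j : ℕ), hj⟩, congrArg (flagTuple n k) (Fin.ext rfl)⟩
      · rintro ⟨t, rfl⟩
        exact ⟨φ t, t.isLt, rfl⟩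
    show Module.finrank ℝ (Submodule.span ℝ (flagTuple n k '' {j | (j : ℕ) < (lvl : ℕ)})) = _
    rw [himg, finrank_span_eq_card ((li_flagTuple hn k).comp φ hinj), Fintype.card_fin]

end Aux14

/-- if `b`, defined on `n`-tuples of complete flags in `ℝⁿ`, is
`PGL_n(ℤ)`-equivariant with values in `ℝ_ε` (i.e. `b(gG_1,…,gG_n) = sign(det g)·b(G)` for
all integer matrices `g` of determinant `±1`; note `sign(det g) = det g`), then the
coboundary of `b` vanishes at the tuple of flags `(F_0, …, F_n)` of `flagTuple`. -/
theorem stmt14 (n : ℕ) (hn : 0 < n) (he : Even n)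
    (b : (Fin n → (Fin (n + 1) → Submodule ℝ (Fin n → ℝ))) → ℝ)
    (hb : ∀ g : Matrix (Fin n) (Fin n) ℤ, (g.det = 1 ∨ g.det = -1) →
      ∀ G : Fin n → (Fin (n + 1) → Submodule ℝ (Fin n → ℝ)),
        (∀ i, IsCompleteFlag (G i)) →
        b (fun i => mapFlag g (G i)) = ((g.det : ℤ) : ℝ) * b G) :
    ∑ i : Fin (n + 1), (-1 : ℝ) ^ (i : ℕ) *
      b ((fun k => stdFlag (flagTuple n k)) ∘ i.succAbove) = 0 := by
  have key : ∀ i : Fin (n + 1), b ((fun k => stdFlag (flagTuple n k)) ∘ i.succAbove) = 0 := by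
    intro i
    set T := (fun k => stdFlag (flagTuple n k)) ∘ i.succAbove with hT
    have hdet : (Aux14.gmat n i).det = -1 := Aux14.det_gmat hn i
    have hcf : ∀ j, IsCompleteFlag (T j) := fun j => Aux14.isCompleteFlag_stdFlag hn _
    have heq := hb (Aux14.gmat n i) (Or.inr hdet) T hcf
    have hfix : (fun j => mapFlag (Aux14.gmat n i) (T j)) = T := by
      funext j
      exact Aux14.mapFlag_fix hn i (i.succAbove j) (Fin.succAbove_ne i j)
    rw [hfix, hdet] at heq
    push_cast at heq
    linarith
  refine Finset.sum_eq_zero fun i _ => ?_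
  rw [key i, mul_zero]


end
end

section
/- Let n be a positive even integer, e_1,…,e_n the standard basis of ℝⁿ, e_0 = e_1+⋯+e_n, and let F_0,…,F_n be the complete flags F_0 = F(e_0,e_1,…,e_{n−1}), F_1 = F(e_1,e_2,…,e_n), and F_i = F(e_i,e_{i+1},…,e_n,e_0,e_1,…,e_{i−1}) for 2 ≤ i ≤ n. Then for each i ∈ {0,1,…,n} there exists g ∈ GL_n(ℤ) with det(g) = −1 such that g·F_j = F_j for every j ≠ i. -/
noncomputable section

namespace Stmt15Aux

variable (n : ℕ)

def Tm : Matrix (Fin n) (Fin n) ℤ :=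
  Matrix.of fun a b => if (b : ℕ) + 1 = n then -1 else if (a : ℕ) = (b : ℕ) + 1 then 1 else 0

def Um : Matrix (Fin n) (Fin n) ℤ :=
  Matrix.of fun a b => if (b : ℕ) = 0 then -1 else if (a : ℕ) + 1 = (b : ℕ) then 1 else 0

def Dm : Matrix (Fin n) (Fin n) ℤ :=
  Matrix.diagonal fun b => if (b : ℕ) + 1 = n then -1 else 1

variable {n}

lemma sum_ind {M : Type*} [AddCommMonoid M] (f : Fin n → M) (c : Fin n) (x : M)
    (h : ∀ b, f b = if b = c then x else 0) : (∑ b, f b) = x := by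
  rw [Finset.sum_congr rfl (fun b _ => h b)]
  simp [Finset.sum_ite_eq']

lemma sum_ind2 {M : Type*} [AddCommMonoid M] (f : Fin n → M) (c d : Fin n) (x y : M)
    (h : ∀ b, f b = (if b = c then x else 0) + (if b = d then y else 0)) :
    (∑ b, f b) = x + y := by
  rw [Finset.sum_congr rfl (fun b _ => h b), Finset.sum_add_distrib]
  simp [Finset.sum_ite_eq']

lemma TU : Tm n * Um n = 1 := by
  ext a c
  rw [Matrix.mul_apply, Matrix.one_apply]
  have ha := a.isLt
  have hc := c.isLt
  rcases Nat.eq_zero_or_pos (c : ℕ) with hc0 | hc0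
  · rcases Nat.eq_zero_or_pos (a : ℕ) with ha0 | ha0
    · rw [sum_ind _ ⟨n - 1, by omega⟩ 1]
      · rw [if_pos (by simp only [Fin.ext_iff]; omega)]
      · intro b
        have hb := b.isLt
        simp only [Tm, Um, Matrix.of_apply, Fin.ext_iff]
        split_ifs <;> omega
    · rw [sum_ind2 _ ⟨n - 1, by omega⟩ ⟨(a : ℕ) - 1, by omega⟩ 1 (-1)]
      · rw [if_neg (by simp only [Fin.ext_iff]; omega)]; ring
      · intro b
        have hb := b.isLt
        simp only [Tm, Um, Matrix.of_apply, Fin.ext_iff]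
        split_ifs <;> omega
  · rw [sum_ind _ ⟨(c : ℕ) - 1, by omega⟩ (if (a : ℕ) = (c : ℕ) then 1 else 0)]
    · simp [Fin.ext_iff]
    · intro b
      have hb := b.isLt
      simp only [Tm, Um, Matrix.of_apply, Fin.ext_iff]
      split_ifs <;> omega

lemma UT : Um n * Tm n = 1 := by
  ext a c
  rw [Matrix.mul_apply, Matrix.one_apply]
  have ha := a.isLt
  have hc := c.isLt
  by_cases hc0 : (c : ℕ) + 1 = n
  · -- c + 1 = n
    by_cases ha0 : (a : ℕ) + 1 = n
    · rw [sum_ind _ ⟨0, by omega⟩ 1]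
      · rw [if_pos (by simp only [Fin.ext_iff]; omega)]
      · intro b
        have hb := b.isLt
        simp only [Tm, Um, Matrix.of_apply, Fin.ext_iff]
        split_ifs <;> omega
    · rw [sum_ind2 _ ⟨0, by omega⟩ ⟨(a : ℕ) + 1, by omega⟩ 1 (-1)]
      · rw [if_neg (by simp only [Fin.ext_iff]; omega)]; ring
      · intro b
        have hb := b.isLt
        simp only [Tm, Um, Matrix.of_apply, Fin.ext_iff]
        split_ifs <;> omega
  · rw [sum_ind _ ⟨(c : ℕ) + 1, by omega⟩ (if (a : ℕ) = (c : ℕ) then 1 else 0)]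
    · simp [Fin.ext_iff]
    · intro b
      have hb := b.isLt
      simp only [Tm, Um, Matrix.of_apply, Fin.ext_iff]
      split_ifs <;> omega

lemma DD : Dm n * Dm n = 1 := by
  have h : (fun i : Fin n => (if (i : ℕ) + 1 = n then (-1 : ℤ) else 1) *
      (if (i : ℕ) + 1 = n then -1 else 1)) = fun _ => 1 :=
    funext fun b => by split_ifs <;> norm_num
  rw [Dm, Matrix.diagonal_mul_diagonal, h, Matrix.diagonal_one]

lemma detD (hn : 0 < n) : (Dm n).det = -1 := by
  rw [Dm, Matrix.det_diagonal]
  rw [Finset.prod_congr rfl (g := fun b => if b = (⟨n - 1, by omega⟩ : Fin n) then (-1 : ℤ) else 1)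
    (fun b _ => by simp only [Fin.ext_iff]; split_ifs <;> omega)]
  simp [Finset.prod_ite_eq']

end Stmt15Aux

noncomputable section Part2
namespace Stmt15Aux

variable {n : ℕ}

lemma Tr_apply (a b : Fin n) : ((Tm n).map (Int.cast : ℤ → ℝ)) a b =
    if (b : ℕ) + 1 = n then -1 else if (a : ℕ) = (b : ℕ) + 1 then 1 else 0 := by
  simp only [Tm, Matrix.map_apply, Matrix.of_apply]
  split_ifs <;> norm_num

lemma Tcyc (hn : 0 < n) (k : Fin (n + 1)) :
    ((Tm n).map (Int.cast : ℤ → ℝ)).mulVecLin (cyc n k) =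
      (if (k : ℕ) = 0 ∨ (k : ℕ) = n then (-1 : ℝ) else 1) • cyc n (k + 1) := by
  have hk := k.isLt
  rcases Nat.eq_zero_or_pos (k : ℕ) with h0 | h0
  · -- k = 0
    have hk1 : ((k + 1 : Fin (n + 1)) : ℕ) = 1 := by
      simp [Fin.val_add, h0, Nat.mod_eq_of_lt, hn]
    funext a
    have ha := a.isLt
    rw [Matrix.mulVecLin_apply, cyc, cyc]
    rw [dif_pos h0, dif_neg (by omega)]
    simp only [Matrix.mulVec, dotProduct, Pi.smul_apply, smul_eq_mul, if_pos (Or.inl h0)]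
    rcases Nat.eq_zero_or_pos (a : ℕ) with ha0 | ha0
    · rw [sum_ind _ ⟨n - 1, by omega⟩ (-1 : ℝ)]
      · rw [Pi.single_apply, if_pos (by simp only [Fin.ext_iff]; omega)]; ring
      · intro b
        have hb := b.isLt
        rw [Tr_apply]; simp only [Fin.ext_iff]
        split_ifs <;> first | omega | ring
    · rw [sum_ind2 _ ⟨n - 1, by omega⟩ ⟨(a : ℕ) - 1, by omega⟩ (-1 : ℝ) 1]
      · rw [Pi.single_apply, if_neg (by simp only [Fin.ext_iff]; omega)]; ring
      · intro b
        have hb := b.isLt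
        rw [Tr_apply]; simp only [Fin.ext_iff]
        split_ifs <;> first | omega | ring
  · by_cases hn' : (k : ℕ) = n
    · -- k = n, k+1 = 0
      have hk1 : ((k + 1 : Fin (n + 1)) : ℕ) = 0 := by
        simp [Fin.val_add, hn']
      funext a
      rw [Matrix.mulVecLin_apply, cyc, cyc, dif_neg (by omega), dif_pos hk1]
      rw [Matrix.mulVec_single_one, Matrix.col_apply]
      simp only [Pi.smul_apply, smul_eq_mul, mul_one, if_pos (Or.inr hn')]
      rw [Tr_apply]
      rw [if_pos (by show (k : ℕ) - 1 + 1 = n; omega)]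
    · -- 1 ≤ k ≤ n - 1
      have hk1 : ((k + 1 : Fin (n + 1)) : ℕ) = (k : ℕ) + 1 := by
        rw [Fin.val_add]
        simp [Fin.val_one, Nat.mod_eq_of_lt (by omega : (k : ℕ) + 1 < n + 1), Nat.mod_eq_of_lt (by omega : (1 : ℕ) < n + 1)]
      funext a
      have ha := a.isLt
      rw [Matrix.mulVecLin_apply, cyc, cyc, dif_neg (by omega), dif_neg (by omega)]
      rw [Matrix.mulVec_single_one, Matrix.col_apply]
      simp only [Pi.smul_apply, smul_eq_mul, mul_one, if_neg (by omega : ¬((k:ℕ) = 0 ∨ (k:ℕ) = n))]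
      rw [Tr_apply]
      simp only [Pi.single_apply, Fin.ext_iff]
      split_ifs <;> first | omega | ring

end Stmt15Aux
end Part2

noncomputable section Part3
namespace Stmt15Aux

variable {n : ℕ}

lemma map_cast_mul (A B : Matrix (Fin n) (Fin n) ℤ) :
    (A * B).map (Int.cast : ℤ → ℝ) = A.map Int.cast * B.map Int.cast := by
  simpa using Matrix.map_mul (L := A) (M := B) (f := Int.castRingHom ℝ)

lemma map_cast_one :
    (1 : Matrix (Fin n) (Fin n) ℤ).map (Int.cast : ℤ → ℝ) = 1 := by
  simpa using Matrix.map_one (Int.cast : ℤ → ℝ) Int.cast_zero Int.cast_one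

lemma mapFlag_mul (A B : Matrix (Fin n) (Fin n) ℤ) (s : Fin (n + 1) → Submodule ℝ (Fin n → ℝ)) :
    mapFlag (A * B) s = mapFlag A (mapFlag B s) := by
  funext m
  simp only [mapFlag, map_cast_mul, Matrix.mulVecLin_mul, Submodule.map_comp]

lemma mapFlag_one (s : Fin (n + 1) → Submodule ℝ (Fin n → ℝ)) :
    mapFlag 1 s = s := by
  funext m
  simp only [mapFlag, map_cast_one, Matrix.mulVecLin_one, Submodule.map_id]

lemma span_map_span (f : (Fin n → ℝ) →ₗ[ℝ] (Fin n → ℝ)) (w w' : Fin n → (Fin n → ℝ))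
    (S : Set (Fin n)) (h : ∀ t ∈ S, ∃ ε : ℝ, ε ≠ 0 ∧ f (w t) = ε • w' t) :
    Submodule.map f (Submodule.span ℝ (w '' S)) = Submodule.span ℝ (w' '' S) := by
  rw [Submodule.map_span]
  apply le_antisymm
  · rw [Submodule.span_le]
    rintro _ ⟨_, ⟨t, ht, rfl⟩, rfl⟩
    obtain ⟨ε, hε, hfw⟩ := h t ht
    rw [hfw]
    exact Submodule.smul_mem _ _ (Submodule.subset_span ⟨t, ht, rfl⟩)
  · rw [Submodule.span_le]
    rintro _ ⟨t, ht, rfl⟩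
    obtain ⟨ε, hε, hfw⟩ := h t ht
    have : w' t = ε⁻¹ • f (w t) := by rw [hfw, smul_smul, inv_mul_cancel₀ hε, one_smul]
    rw [this]
    exact Submodule.smul_mem _ _ (Submodule.subset_span ⟨_, ⟨t, ht, rfl⟩, rfl⟩)

lemma flag_T (hn : 0 < n) (j : Fin (n + 1)) :
    mapFlag (Tm n) (stdFlag (flagTuple n j)) = stdFlag (flagTuple n (j + 1)) := by
  funext m
  simp only [mapFlag, stdFlag]
  apply span_map_span
  intro t _
  refine ⟨if ((j + Fin.castSucc t : Fin (n + 1)) : ℕ) = 0 ∨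
      ((j + Fin.castSucc t : Fin (n + 1)) : ℕ) = n then -1 else 1, ?_, ?_⟩
  · split_ifs <;> norm_num
  · simp only [flagTuple]
    rw [show (j + 1) + Fin.castSucc t = (j + Fin.castSucc t) + 1 from add_right_comm _ _ _]
    exact Tcyc hn (j + Fin.castSucc t)

end Stmt15Aux
end Part3

noncomputable section Part4
namespace Stmt15Aux

variable {n : ℕ}

lemma Dr_diag : (Dm n).map (Int.cast : ℤ → ℝ) =
    Matrix.diagonal (fun b : Fin n => if (b : ℕ) + 1 = n then (-1 : ℝ) else 1) := by
  rw [Dm, Matrix.diagonal_map (by simp)]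
  have h : (fun m : Fin n => (Int.cast (if (m : ℕ) + 1 = n then (-1 : ℤ) else 1) : ℝ)) =
      (fun b : Fin n => if (b : ℕ) + 1 = n then (-1 : ℝ) else 1) :=
    funext fun b => by split_ifs <;> norm_num
  rw [h]

lemma Dcyc_ne (k : Fin (n + 1)) (hk : (k : ℕ) ≠ 0) :
    ((Dm n).map (Int.cast : ℤ → ℝ)).mulVecLin (cyc n k) =
      (if (k : ℕ) = n then (-1 : ℝ) else 1) • cyc n k := by
  funext a
  rw [Matrix.mulVecLin_apply, Dr_diag, Matrix.mulVec_diagonal]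
  rw [cyc, dif_neg hk]
  simp only [Pi.smul_apply, smul_eq_mul, Pi.single_apply, Fin.ext_iff]
  have hk' := k.isLt
  have ha := a.isLt
  split_ifs <;> first | omega | ring

lemma Dcyc0 (hn : 0 < n) :
    ((Dm n).map (Int.cast : ℤ → ℝ)).mulVecLin (cyc n 0) =
      cyc n 0 - (2 : ℝ) • cyc n ⟨n, n.lt_succ_self⟩ := by
  funext a
  rw [Matrix.mulVecLin_apply, Dr_diag, Matrix.mulVec_diagonal]
  simp only [cyc]
  rw [dif_pos (by simp), dif_neg (by show ¬(n = 0); omega)]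
  simp only [Pi.sub_apply, Pi.smul_apply, smul_eq_mul, Pi.single_apply, Fin.ext_iff]
  have ha := a.isLt
  split_ifs <;> first | omega | ring

lemma flag_D (hn : 0 < n) (j : Fin (n + 1)) (hj : j ≠ 0) :
    mapFlag (Dm n) (stdFlag (flagTuple n j)) = stdFlag (flagTuple n j) := by
  have hj' : (j : ℕ) ≠ 0 := by
    intro h; exact hj (Fin.ext (by simp [h]))
  have hjv := j.isLt
  have key : ∀ m : Fin (n + 1),
      Submodule.map ((Dm n).map (Int.cast : ℤ → ℝ)).mulVecLin
        (stdFlag (flagTuple n j) m) ≤ stdFlag (flagTuple n j) m := by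
    intro m
    simp only [stdFlag]
    rw [Submodule.map_span, Submodule.span_le]
    rintro _ ⟨_, ⟨t, ht, rfl⟩, rfl⟩
    have htv := t.isLt
    by_cases hk : ((j + Fin.castSucc t : Fin (n + 1)) : ℕ) = 0
    · have hval : ((j + Fin.castSucc t : Fin (n + 1)) : ℕ) = ((j : ℕ) + (t : ℕ)) % (n + 1) := by
        rw [Fin.val_add, Fin.coe_castSucc]
      have hsum : (j : ℕ) + (t : ℕ) = n + 1 := by
        have h2 : ((j : ℕ) + (t : ℕ)) % (n + 1) = 0 := by rw [← hval]; exact hk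
        rcases Nat.lt_or_ge ((j : ℕ) + (t : ℕ)) (n + 1) with hlt | hge
        · rw [Nat.mod_eq_of_lt hlt] at h2; omega
        · rw [Nat.mod_eq_sub_mod hge, Nat.mod_eq_of_lt (by omega)] at h2; omega
      have ht1 : 1 ≤ (t : ℕ) := by omega
      have hk0 : j + Fin.castSucc t = 0 := Fin.ext (by simpa using hk)
      set t' : Fin n := ⟨(t : ℕ) - 1, by omega⟩ with ht'
      have hidx : j + Fin.castSucc t' = ⟨n, n.lt_succ_self⟩ := by
        rw [Fin.ext_iff, Fin.val_add, Fin.coe_castSucc]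
        show ((j : ℕ) + ((t : ℕ) - 1)) % (n + 1) = n
        rw [Nat.mod_eq_of_lt (by omega)]
        omega
      have hwt' : flagTuple n j t' = cyc n ⟨n, n.lt_succ_self⟩ := by
        simp only [flagTuple, hidx]
      have hwt : flagTuple n j t = cyc n 0 := by
        simp only [flagTuple, hk0]
      have hfw : ((Dm n).map (Int.cast : ℤ → ℝ)).mulVecLin (flagTuple n j t) =
          flagTuple n j t - (2 : ℝ) • flagTuple n j t' := by
        rw [hwt, hwt']
        exact Dcyc0 hn
      rw [hfw]
      refine sub_mem (Submodule.subset_span ⟨t, ht, rfl⟩) (Submodule.smul_mem _ _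
        (Submodule.subset_span ⟨t', ?_, rfl⟩))
      show (t : ℕ) - 1 < (m : ℕ)
      have : (t : ℕ) < (m : ℕ) := ht
      omega
    · have hfw := Dcyc_ne (j + Fin.castSucc t) hk
      rw [show ((Dm n).map (Int.cast : ℤ → ℝ)).mulVecLin (flagTuple n j t) =
          (if ((j + Fin.castSucc t : Fin (n + 1)) : ℕ) = n then (-1 : ℝ) else 1) •
            flagTuple n j t from hfw]
      exact Submodule.smul_mem _ _ (Submodule.subset_span ⟨t, ht, rfl⟩)
  have hDD : (((Dm n).map (Int.cast : ℤ → ℝ)).mulVecLin).comp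
      (((Dm n).map (Int.cast : ℤ → ℝ)).mulVecLin) = LinearMap.id := by
    rw [← Matrix.mulVecLin_mul, ← map_cast_mul, DD, map_cast_one, Matrix.mulVecLin_one]
  funext m
  refine le_antisymm (key m) ?_
  have h2 : stdFlag (flagTuple n j) m =
      Submodule.map ((Dm n).map (Int.cast : ℤ → ℝ)).mulVecLin
        (Submodule.map ((Dm n).map (Int.cast : ℤ → ℝ)).mulVecLin
          (stdFlag (flagTuple n j) m)) := by
    rw [← Submodule.map_comp, hDD, Submodule.map_id]
  exact h2.le.trans (Submodule.map_mono (key m))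

end Stmt15Aux
end Part4

noncomputable section Part5
namespace Stmt15Aux

variable {n : ℕ}
open Fin.NatCast

lemma flag_U (hn : 0 < n) (j : Fin (n + 1)) :
    mapFlag (Um n) (stdFlag (flagTuple n j)) = stdFlag (flagTuple n (j - 1)) := by
  conv_lhs => rw [show j = (j - 1) + 1 from (sub_add_cancel j 1).symm]
  rw [← flag_T hn (j - 1), ← mapFlag_mul, UT, mapFlag_one]

lemma flag_T_pow (hn : 0 < n) (j : Fin (n + 1)) (N : ℕ) :
    mapFlag (Tm n ^ N) (stdFlag (flagTuple n j)) =
      stdFlag (flagTuple n (j + (N : Fin (n + 1)))) := by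
  induction N generalizing j with
  | zero => rw [pow_zero, mapFlag_one, Nat.cast_zero, add_zero]
  | succ N ih =>
      rw [pow_succ, mapFlag_mul, flag_T hn, ih, Nat.cast_add, Nat.cast_one]
      congr 2; abel

lemma flag_U_pow (hn : 0 < n) (j : Fin (n + 1)) (N : ℕ) :
    mapFlag (Um n ^ N) (stdFlag (flagTuple n j)) =
      stdFlag (flagTuple n (j - (N : Fin (n + 1)))) := by
  induction N generalizing j with
  | zero => rw [pow_zero, mapFlag_one, Nat.cast_zero, sub_zero]
  | succ N ih =>
      rw [pow_succ, mapFlag_mul, flag_U hn, ih, Nat.cast_add, Nat.cast_one]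
      congr 2; abel

theorem stmt15aux (hn : 0 < n) (i : Fin (n + 1)) :
    ∃ g : Matrix (Fin n) (Fin n) ℤ, g.det = -1 ∧
      ∀ j : Fin (n + 1), j ≠ i →
        mapFlag g (stdFlag (flagTuple n j)) = stdFlag (flagTuple n j) := by
  refine ⟨Tm n ^ (i : ℕ) * Dm n * Um n ^ (i : ℕ), ?_, ?_⟩
  · have hcomm : Commute (Tm n) (Um n) := by
      show Tm n * Um n = Um n * Tm n
      rw [TU, UT]
    have hTU : Tm n ^ (i : ℕ) * Um n ^ (i : ℕ) = 1 := by
      rw [← hcomm.mul_pow, TU, one_pow]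
    rw [Matrix.det_mul, Matrix.det_mul, detD hn]
    have h2 : (Tm n ^ (i : ℕ)).det * (Um n ^ (i : ℕ)).det = 1 := by
      rw [← Matrix.det_mul, hTU, Matrix.det_one]
    have h3 : (Tm n ^ (i : ℕ)).det * -1 * (Um n ^ (i : ℕ)).det =
        -((Tm n ^ (i : ℕ)).det * (Um n ^ (i : ℕ)).det) := by ring
    rw [h3, h2]
  · intro j hj
    have hi : ((i : ℕ) : Fin (n + 1)) = i := Fin.cast_val_eq_self i
    have hji : j - ((i : ℕ) : Fin (n + 1)) ≠ 0 := by
      rw [hi]; exact sub_ne_zero.mpr hj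
    rw [mul_assoc, mapFlag_mul, mapFlag_mul, flag_U_pow hn, flag_D hn _ hji, flag_T_pow hn,
      sub_add_cancel]

end Stmt15Aux
end Part5

/-- for the complete flags `F_0, …, F_n` of `flagTuple` and each index `i`,
there is an integer matrix `g` of determinant `−1` fixing `F_j` for every `j ≠ i`. -/
theorem stmt15 (n : ℕ) (hn : 0 < n) (he : Even n) (i : Fin (n + 1)) :
    ∃ g : Matrix (Fin n) (Fin n) ℤ, g.det = -1 ∧
      ∀ j : Fin (n + 1), j ≠ i →
        mapFlag g (stdFlag (flagTuple n j)) = stdFlag (flagTuple n j) := by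
  exact Stmt15Aux.stmt15aux (n := n) hn i

end
end

section
/- Let n ≥ 1 and let v_0,…,v_n ∈ ℝⁿ be such that 0 lies in the interior of the convex hull of {v_0,…,v_n}. Then the quantity (−1)^i · ori(v_0,…,v̂_i,…,v_n) is nonzero and independent of i ∈ {0,…,n}; i.e. every n of the vectors form a basis of ℝⁿ and (−1)^i ori(v_0,…,v̂_i,…,v_n) = (−1)^j ori(v_0,…,v̂_j,…,v_n) for all i, j. -/
noncomputable section

/-- Sign of the determinant of the matrix whose columns are `v 0, …, v (n-1)`
(zero if they do not form a basis). -/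
def oriV {n : ℕ} (v : Fin n → (Fin n → ℝ)) : ℝ :=
  Real.sign (Matrix.det (Matrix.of fun i j => v j i))

private lemma sign_mul_pos_right (c x : ℝ) (hc : 0 < c) :
    Real.sign (x * c) = Real.sign x := by
  rcases lt_trichotomy x 0 with h | h | h
  · rw [Real.sign_of_neg h, Real.sign_of_neg (mul_neg_of_neg_of_pos h hc)]
  · simp [h, Real.sign_zero]
  · rw [Real.sign_of_pos h, Real.sign_of_pos (mul_pos h hc)]

/-- if `0` lies in the interior of the convex hull of `{v_0,…,v_n} ⊆ ℝⁿ`,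
then `(−1)^i · ori(v_0,…,v̂_i,…,v_n)` is nonzero and independent of `i`. -/
theorem stmt16 (n : ℕ) (hn : 1 ≤ n) (v : Fin (n + 1) → (Fin n → ℝ))
    (hv : (0 : Fin n → ℝ) ∈ interior (convexHull ℝ (Set.range v))) :
    ∀ i j : Fin (n + 1),
      oriV (v ∘ i.succAbove) ≠ 0 ∧
      (-1 : ℝ) ^ (i : ℕ) * oriV (v ∘ i.succAbove) =
        (-1 : ℝ) ^ (j : ℕ) * oriV (v ∘ j.succAbove) := by
  classical
  -- v is an affine basis
  have hspan : affineSpan ℝ (Set.range v) = ⊤ :=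
    affineSpan_eq_top_of_nonempty_interior ⟨0, hv⟩
  have hvs : vectorSpan ℝ (Set.range v) = ⊤ := by
    rw [← direction_affineSpan, hspan, AffineSubspace.direction_top]
  have hind : AffineIndependent ℝ v := by
    rw [affineIndependent_iff_finrank_vectorSpan_eq ℝ v
      (by simp : Fintype.card (Fin (n + 1)) = n + 1), hvs]
    simp [finrank_top, Module.finrank_fin_fun]
  let b : AffineBasis (Fin (n + 1)) ℝ (Fin n → ℝ) := ⟨v, hind, hspan⟩
  set lam : Fin (n + 1) → ℝ := fun i => b.coord i 0 with hlam
  have hpos : ∀ i, 0 < lam i := by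
    have hInt := b.interior_convexHull
    have hb : Set.range (⇑b) = Set.range v := rfl
    rw [← hb, hInt] at hv
    exact hv
  have hsum1 : ∑ i, lam i = 1 := b.sum_coord_apply_eq_one 0
  have hcomb : ∑ i, lam i • v i = 0 := b.linear_combination_coord_eq_self 0
  -- the big matrix
  set A : Matrix (Fin (n + 1)) (Fin (n + 1)) ℝ :=
    Matrix.of fun i j => (Fin.cons (1 : ℝ) (v j) : Fin (n + 1) → ℝ) i with hA
  have hAunit : IsUnit A := by
    rw [← Matrix.linearIndependent_cols_iff_isUnit]
    rw [Fintype.linearIndependent_iff]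
    intro g hg
    have hg' : ∀ i : Fin (n + 1), ∑ j, g j * A i j = 0 := by
      intro i
      have := congrFun hg i
      simpa [Finset.sum_apply, Matrix.transpose_apply] using this
    have hsum0 : ∑ j, g j = 0 := by
      have := hg' 0
      simpa [hA] using this
    have hcomb0 : ∑ j, g j • v j = 0 := by
      funext k
      have := hg' k.succ
      simpa [hA, Finset.sum_apply] using this
    intro j
    exact affineIndependent_iff.1 hind Finset.univ g hsum0 hcomb0 j (Finset.mem_univ j)
  have hAdet : A.det ≠ 0 := (Matrix.isUnit_iff_isUnit_det A).1 hAunit |>.ne_zero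
  -- Cramer's rule
  have hmul : A.mulVec lam = Pi.single (0 : Fin (n + 1)) 1 := by
    funext i
    induction i using Fin.cases with
    | zero =>
        simp only [Matrix.mulVec, dotProduct, hA, Matrix.of_apply, Fin.cons_zero, one_mul,
          hsum1, Pi.single_eq_same]
    | succ k =>
        have := congrFun hcomb k
        simp only [Finset.sum_apply, Pi.smul_apply, smul_eq_mul, Pi.zero_apply] at this
        simp only [Matrix.mulVec, dotProduct, hA, Matrix.of_apply, Fin.cons_succ]
        rw [Pi.single_eq_of_ne (Fin.succ_ne_zero k)]
        rw [← this]
        exact Finset.sum_congr rfl fun j _ => mul_comm _ _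
  have hinj : Function.Injective A.mulVec := Matrix.mulVec_injective_iff_isUnit.2 hAunit
  have hcram : A.det • lam = Matrix.cramer A (Pi.single (0 : Fin (n + 1)) 1) := by
    apply hinj
    rw [Matrix.mulVec_cramer, Matrix.mulVec_smul, hmul]
  -- minors
  set D : Fin (n + 1) → ℝ := fun i =>
    Matrix.det (Matrix.of fun k j => (v ∘ i.succAbove) j k) with hD
  have key : ∀ i, A.det * lam i = (-1 : ℝ) ^ (i : ℕ) * D i := by
    intro i
    have h1 : A.det * lam i = (Matrix.updateCol A i (Pi.single (0 : Fin (n + 1)) 1)).det := by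
      have := congrFun hcram i
      simpa [Matrix.cramer_apply] using this
    rw [h1]
    rw [Matrix.det_succ_column _ i]
    rw [Finset.sum_eq_single (0 : Fin (n + 1))]
    · rw [Matrix.updateCol_self]
      have hsub : ((Matrix.updateCol A i (Pi.single (0 : Fin (n + 1)) 1)).submatrix
          (Fin.succAbove 0) i.succAbove) = Matrix.of fun k j => (v ∘ i.succAbove) j k := by
        ext k j
        simp only [Matrix.submatrix_apply, Matrix.updateCol_apply, Fin.succAbove_zero]
        rw [if_neg (Fin.succAbove_ne i j)]
        simp [hA]
      rw [hsub]
      simp [hD]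
    · intro r _ hr
      rw [Matrix.updateCol_self, Pi.single_eq_of_ne hr]
      ring
    · intro h
      exact absurd (Finset.mem_univ _) h
  have hDne : ∀ i, D i ≠ 0 := by
    intro i hzero
    have := key i
    rw [hzero, mul_zero] at this
    exact (mul_ne_zero hAdet (hpos i).ne') this
  have hsign : ∀ i : Fin (n + 1), (-1 : ℝ) ^ (i : ℕ) * Real.sign (D i) = Real.sign A.det := by
    intro i
    have hDi : D i = (-1 : ℝ) ^ (i : ℕ) * A.det * lam i := by
      have := key i
      rcases Nat.even_or_odd (i : ℕ) with he | ho
      · rw [he.neg_one_pow] at this ⊢; linarith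
      · rw [ho.neg_one_pow] at this ⊢; linarith
    rw [hDi, sign_mul_pos_right _ _ (hpos i)]
    rcases Nat.even_or_odd (i : ℕ) with he | ho
    · rw [he.neg_one_pow]; ring_nf
    · rw [ho.neg_one_pow]
      simp [neg_one_mul, Real.sign_neg]
  intro i j
  have hOri : ∀ i : Fin (n + 1), oriV (v ∘ i.succAbove) = Real.sign (D i) := fun i => rfl
  refine ⟨?_, ?_⟩
  · rw [hOri]
    simp only [ne_eq, Real.sign_eq_zero_iff]
    exact hDne i
  · rw [hOri, hOri, hsign, hsign]

end
end
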